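/- An instance of DR(1) admits a solution if and only if for every (i,j) ∈ I one has Σ_{l=0}^{k−1} r_{j+l} = ρ_j(m) and Σ_{l=0}^{k−1} c_{i+l} = σ_i(n). -/

import Mathlib

open scoped Classical

/-- The grid `[m] × [n] = {1,…,m} × {1,…,n}`. -/
def gridIcc (m n : ℕ) : Finset (ℕ × ℕ) := Finset.Icc 1 m ×ˢ Finset.Icc 1 n

/-- The corner points `C(m,n,k) = ([m] × [n]) ∩ (kℕ₀+1)²`. -/
def cornerPts (m n k : ℕ) : Finset (ℕ × ℕ) :=
  (gridIcc m n).filter fun p => p.1 % k = 1 % k ∧ p.2 % k = 1 % k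

/-- The block `B_k(i,j) = {(i+a, j+b) : a, b ∈ [k-1]₀}`. -/
def blockF (k i j : ℕ) : Finset (ℕ × ℕ) :=
  Finset.Icc i (i + k - 1) ×ˢ Finset.Icc j (j + k - 1)

/-- `G(I) = ⋃_{(i,j) ∈ I} B_k(i,j)`. -/
def GofI (k : ℕ) (I : Finset (ℕ × ℕ)) : Finset (ℕ × ℕ) :=
  I.biUnion fun p => blockF k p.1 p.2

/-- `Π_x(I)`, the projection of `I` onto the first coordinate. -/
def PiX (I : Finset (ℕ × ℕ)) : Finset ℕ := I.image Prod.fst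

/-- `Π_y(I)`, the projection of `I` onto the second coordinate. -/
def PiY (I : Finset (ℕ × ℕ)) : Finset ℕ := I.image Prod.snd

/-- `σ_i(j) = |({i} × [j]) ∩ I|`. -/
def sigmaI (I : Finset (ℕ × ℕ)) (i j : ℕ) : ℕ :=
  (I.filter fun z => z.1 = i ∧ z.2 ∈ Finset.Icc 1 j).card

/-- `ρ_j(i) = |([i] × {j}) ∩ I|`. -/
def rhoI (I : Finset (ℕ × ℕ)) (j i : ℕ) : ℕ :=
  (I.filter fun z => z.1 ∈ Finset.Icc 1 i ∧ z.2 = j).card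

open Finset

section Aux

lemma sum_Icc_off (f : ℕ → ℕ) (j k : ℕ) (hk : 0 < k) :
    ∑ q ∈ Finset.Icc j (j + k - 1), f q = ∑ l ∈ Finset.range k, f (j + l) := by
  have h2 : Finset.Icc j (j + k - 1) = Finset.Ico j (j + k) := by
    rw [← Finset.Ico_add_one_right_eq_Icc]
    congr 1
    omega
  rw [h2, Finset.sum_Ico_eq_sum_range, Nat.add_sub_cancel_left]

lemma corner_unique {k i i' p : ℕ} (hk : 0 < k) (hi : i % k = 1 % k) (hi' : i' % k = 1 % k)
    (h1 : i ≤ p) (h2 : p ≤ i + k - 1) (h1' : i' ≤ p) (h2' : p ≤ i' + k - 1) : i = i' := by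
  have hmod : i % k = i' % k := hi.trans hi'.symm
  rcases le_total i i' with h | h
  · have hd : k ∣ i' - i := (Nat.modEq_iff_dvd' h).mp hmod
    have := Nat.eq_zero_of_dvd_of_lt hd (show i' - i < k by omega)
    omega
  · have hd : k ∣ i - i' := (Nat.modEq_iff_dvd' h).mp hmod.symm
    have := Nat.eq_zero_of_dvd_of_lt hd (show i - i' < k by omega)
    omega

lemma mem_blockF {k i j : ℕ} {z : ℕ × ℕ} :
    z ∈ blockF k i j ↔ (i ≤ z.1 ∧ z.1 ≤ i + k - 1) ∧ (j ≤ z.2 ∧ z.2 ≤ j + k - 1) := by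
  cases z with
  | mk a b => simp [blockF, Finset.mem_Icc]

lemma mem_cornerPts {m n k : ℕ} {z : ℕ × ℕ} :
    z ∈ cornerPts m n k ↔
      (1 ≤ z.1 ∧ z.1 ≤ m ∧ 1 ≤ z.2 ∧ z.2 ≤ n) ∧ z.1 % k = 1 % k ∧ z.2 % k = 1 % k := by
  cases z with
  | mk a b => simp [cornerPts, gridIcc, Finset.mem_Icc, and_assoc]

lemma sum_ind {α : Type*} (s : Finset α) (p : α → Prop) [DecidablePred p] :
    ∑ a ∈ s, (if p a then (1:ℕ) else 0) = (s.filter p).card := by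
  simp [Finset.sum_boole]

end Aux

section PSum

/-- partial sums -/
def psum (g : ℕ → ℕ) (l : ℕ) : ℕ := ∑ l' ∈ Finset.range l, g l'

lemma psum_mono (g : ℕ → ℕ) : Monotone (psum g) :=
  monotone_nat_of_le_succ fun l => by
    simp only [psum, Finset.sum_range_succ]; exact Nat.le_add_right _ _

/-- offset function: least `l` with `t < psum g (l+1)` -/
noncomputable def offF (g : ℕ → ℕ) (t : ℕ) : ℕ := sInf {l | t < psum g (l + 1)}

lemma off_spec (g : ℕ → ℕ) (t k : ℕ) (ht : t < psum g k) :
    psum g (offF g t) ≤ t ∧ t < psum g (offF g t + 1) ∧ offF g t < k := by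
  have hk : 0 < k := Nat.pos_of_ne_zero (by rintro rfl; simp [psum] at ht)
  have hne : (k - 1) ∈ {l | t < psum g (l + 1)} := by
    simpa [Nat.sub_add_cancel hk] using ht
  have hmem : t < psum g (offF g t + 1) := Nat.sInf_mem ⟨_, hne⟩
  have hle : offF g t ≤ k - 1 := Nat.sInf_le hne
  refine ⟨?_, hmem, by omega⟩
  cases h : offF g t with
  | zero => simp [psum]
  | succ o =>
    have hlt : o < offF g t := by omega
    have ho : o ∉ {l | t < psum g (l + 1)} := Nat.notMem_of_lt_sInf hlt
    simp only [Set.mem_setOf_eq, not_lt] at ho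
    omega

lemma off_count (g : ℕ → ℕ) (k l : ℕ) (hl : l < k) :
    ((Finset.range (psum g k)).filter (fun t => offF g t = l)).card = g l := by
  have hEq : (Finset.range (psum g k)).filter (fun t => offF g t = l)
      = Finset.Ico (psum g l) (psum g (l + 1)) := by
    ext t
    simp only [mem_filter, Finset.mem_range, Finset.mem_Ico]
    constructor
    · rintro ⟨ht, rfl⟩
      exact ⟨(off_spec g t k ht).1, (off_spec g t k ht).2.1⟩
    · rintro ⟨h1, h2⟩
      have ht : t < psum g k := lt_of_lt_of_le h2 (psum_mono g hl)
      obtain ⟨a1, a2, -⟩ := off_spec g t k ht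
      refine ⟨ht, ?_⟩
      by_contra hne
      rcases lt_or_gt_of_ne hne with h | h
      · have := psum_mono g (show offF g t + 1 ≤ l by omega)
        omega
      · have := psum_mono g (show l + 1 ≤ offF g t by omega)
        omega
  rw [hEq, Nat.card_Ico]
  have : psum g (l + 1) = psum g l + g l := by simp [psum, Finset.sum_range_succ]
  omega

lemma card_filter_rank (s : Finset ℕ) (P : ℕ → Prop) [DecidablePred P] :
    (s.filter (fun i => P ((s.filter (· < i)).card))).card
      = ((Finset.range s.card).filter P).card := by
  set φ : ℕ → ℕ := fun i => (s.filter (· < i)).card with hφ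
  have hmono : ∀ a ∈ s, ∀ b ∈ s, a < b → φ a < φ b := by
    intro a ha b hb hab
    apply Finset.card_lt_card
    rw [Finset.ssubset_iff_of_subset (Finset.monotone_filter_right s (fun x _ hx => lt_trans hx hab))]
    exact ⟨a, Finset.mem_filter.mpr ⟨ha, hab⟩, by simp⟩
  have hinj : Set.InjOn φ s := by
    intro a ha b hb h
    by_contra hne
    rcases lt_or_gt_of_ne hne with h' | h'
    · exact absurd h (Nat.ne_of_lt (hmono a ha b hb h'))
    · exact absurd h.symm (Nat.ne_of_lt (hmono b hb a ha h'))
  have himg : s.image φ = Finset.range s.card := by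
    apply Finset.eq_of_subset_of_card_le
    · intro t ht
      simp only [Finset.mem_image] at ht
      obtain ⟨a, ha, rfl⟩ := ht
      simp only [Finset.mem_range]
      exact Finset.card_lt_card ⟨Finset.filter_subset _ _,
        fun hsub => by simpa using Finset.mem_filter.mp (hsub ha)⟩
    · rw [Finset.card_range, Finset.card_image_of_injOn hinj]
  calc (s.filter fun i => P (φ i)).card
      = ((s.filter fun i => P (φ i)).image φ).card :=
        (Finset.card_image_of_injOn (hinj.mono (Finset.filter_subset _ _))).symm
    _ = ((s.image φ).filter P).card := by rw [Finset.filter_image]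
    _ = ((Finset.range s.card).filter P).card := by rw [himg]

lemma card_filter_rank' {α : Type*} (s : Finset α) (key : α → ℕ)
    (hinj : Set.InjOn key ↑s) (P : ℕ → Prop) [DecidablePred P] :
    (s.filter (fun a => P (((s.image key).filter (· < key a)).card))).card
      = ((Finset.range s.card).filter P).card := by
  have h2 : ((s.image key).filter (fun i => P (((s.image key).filter (· < i)).card)))
      = (s.filter (fun a => P (((s.image key).filter (· < key a)).card))).image key :=
    Finset.filter_image
  have h3 := card_filter_rank (s.image key) P
  rw [Finset.card_image_of_injOn hinj, h2,
    Finset.card_image_of_injOn (hinj.mono (Finset.filter_subset _ _))] at h3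
  exact h3

lemma rank_lt {α : Type*} (s : Finset α) (key : α → ℕ)
    (hinj : Set.InjOn key ↑s) {a : α} (ha : a ∈ s) :
    ((s.image key).filter (· < key a)).card < s.card := by
  rw [← Finset.card_image_of_injOn hinj]
  apply Finset.card_lt_card
  refine ⟨Finset.filter_subset _ _, fun hsub => ?_⟩
  have := Finset.mem_filter.mp (hsub (Finset.mem_image_of_mem key ha))
  simp at this

end PSum

section Strips

lemma filter_snd_GofI {k m n : ℕ} (hk : 0 < k) {I : Finset (ℕ × ℕ)} (hI : I ⊆ cornerPts m n k)
    {j : ℕ} (hj : j % k = 1 % k) :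
    (GofI k I).filter (fun z => z.2 = j)
      = (I.filter (fun z => z.2 = j)).biUnion
          (fun q => Finset.Icc q.1 (q.1 + k - 1) ×ˢ {j}) := by
  ext z
  simp only [GofI, mem_filter, mem_biUnion, Finset.mem_product, Finset.mem_singleton,
    Finset.mem_Icc, mem_blockF]
  constructor
  · rintro ⟨⟨q, hq, hz⟩, hz2⟩
    have hq2 : q.2 % k = 1 % k := (mem_cornerPts.mp (hI hq)).2.2
    have hq2j : q.2 = j := by
      apply corner_unique (p := j) hk hq2 hj (by omega) (by omega) le_rfl (by omega)
    exact ⟨q, ⟨hq, hq2j⟩, ⟨hz.1.1, hz.1.2⟩, hz2⟩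
  · rintro ⟨q, ⟨hqI, hq2⟩, hz1, hz2⟩
    exact ⟨⟨q, hqI, hz1, by omega, by omega⟩, hz2⟩

lemma filter_fst_GofI {k m n : ℕ} (hk : 0 < k) {I : Finset (ℕ × ℕ)} (hI : I ⊆ cornerPts m n k)
    {i : ℕ} (hi : i % k = 1 % k) :
    (GofI k I).filter (fun z => z.1 = i)
      = (I.filter (fun z => z.1 = i)).biUnion
          (fun q => {i} ×ˢ Finset.Icc q.2 (q.2 + k - 1)) := by
  ext z
  simp only [GofI, mem_filter, mem_biUnion, Finset.mem_product, Finset.mem_singleton,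
    Finset.mem_Icc, mem_blockF]
  constructor
  · rintro ⟨⟨q, hq, hz⟩, hz1⟩
    have hq1 : q.1 % k = 1 % k := (mem_cornerPts.mp (hI hq)).2.1
    have hq1i : q.1 = i := by
      apply corner_unique (p := i) hk hq1 hi (by omega) (by omega) le_rfl (by omega)
    exact ⟨q, ⟨hq, hq1i⟩, hz1, hz.2.1, hz.2.2⟩
  · rintro ⟨q, ⟨hqI, hq1⟩, hz1, hz2⟩
    exact ⟨⟨q, hqI, ⟨by omega, by omega⟩, hz2⟩, hz1⟩

lemma disjRow {k m n : ℕ} (hk : 0 < k) {I : Finset (ℕ × ℕ)} (hI : I ⊆ cornerPts m n k)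
    (j : ℕ) :
    (↑(I.filter (fun z => z.2 = j)) : Set (ℕ × ℕ)).PairwiseDisjoint
      (fun q => Finset.Icc q.1 (q.1 + k - 1) ×ˢ ({j} : Finset ℕ)) := by
  intro a ha b hb hab
  simp only [Finset.coe_filter, Set.mem_setOf_eq] at ha hb
  have ha1 := (mem_cornerPts.mp (hI ha.1)).2.1
  have hb1 := (mem_cornerPts.mp (hI hb.1)).2.1
  refine Finset.disjoint_left.mpr ?_
  rintro ⟨p, q⟩ hp hq
  simp only [Finset.mem_product, Finset.mem_Icc, Finset.mem_singleton] at hp hq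
  exact hab (Prod.ext (corner_unique hk ha1 hb1 hp.1.1 hp.1.2 hq.1.1 hq.1.2)
    (ha.2.trans hb.2.symm))

lemma disjCol {k m n : ℕ} (hk : 0 < k) {I : Finset (ℕ × ℕ)} (hI : I ⊆ cornerPts m n k)
    (i : ℕ) :
    (↑(I.filter (fun z => z.1 = i)) : Set (ℕ × ℕ)).PairwiseDisjoint
      (fun q => ({i} : Finset ℕ) ×ˢ Finset.Icc q.2 (q.2 + k - 1)) := by
  intro a ha b hb hab
  simp only [Finset.coe_filter, Set.mem_setOf_eq] at ha hb
  have ha2 := (mem_cornerPts.mp (hI ha.1)).2.2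
  have hb2 := (mem_cornerPts.mp (hI hb.1)).2.2
  refine Finset.disjoint_left.mpr ?_
  rintro ⟨p, q⟩ hp hq
  simp only [Finset.mem_product, Finset.mem_Icc, Finset.mem_singleton] at hp hq
  exact hab (Prod.ext (ha.2.trans hb.2.symm)
    (corner_unique hk ha2 hb2 hp.2.1 hp.2.2 hq.2.1 hq.2.2))

lemma rhoI_card {m n k : ℕ} {I : Finset (ℕ × ℕ)} (hI : I ⊆ cornerPts m n k) (j : ℕ) :
    rhoI I j m = (I.filter fun z => z.2 = j).card := by
  unfold rhoI
  congr 1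
  apply Finset.filter_congr
  intro z hz
  have h := (mem_cornerPts.mp (hI hz)).1
  simp only [Finset.mem_Icc]
  exact ⟨fun h' => h'.2, fun h' => ⟨⟨h.1, h.2.1⟩, h'⟩⟩

lemma sigmaI_card {m n k : ℕ} {I : Finset (ℕ × ℕ)} (hI : I ⊆ cornerPts m n k) (i : ℕ) :
    sigmaI I i n = (I.filter fun z => z.1 = i).card := by
  unfold sigmaI
  congr 1
  apply Finset.filter_congr
  intro z hz
  have h := (mem_cornerPts.mp (hI hz)).1
  simp only [Finset.mem_Icc]
  exact ⟨fun h' => h'.1, fun h' => ⟨h', h.2.2.1, h.2.2.2⟩⟩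

lemma injOn_fst_strip (I : Finset (ℕ × ℕ)) (j : ℕ) :
    Set.InjOn Prod.fst (↑(I.filter fun z => z.2 = j) : Set (ℕ × ℕ)) := by
  intro a ha b hb h
  simp only [Finset.coe_filter, Set.mem_setOf_eq] at ha hb
  exact Prod.ext h (ha.2.trans hb.2.symm)

lemma injOn_snd_strip (I : Finset (ℕ × ℕ)) (i : ℕ) :
    Set.InjOn Prod.snd (↑(I.filter fun z => z.1 = i) : Set (ℕ × ℕ)) := by
  intro a ha b hb h
  simp only [Finset.coe_filter, Set.mem_setOf_eq] at ha hb
  exact Prod.ext (ha.2.trans hb.2.symm) h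

lemma row_strip_sum {k m n : ℕ} (hk : 0 < k) {I : Finset (ℕ × ℕ)} (hI : I ⊆ cornerPts m n k)
    (x : ℕ × ℕ → ℕ) {j : ℕ} (hj : j % k = 1 % k)
    (hblk : ∀ p ∈ I, ∑ z ∈ blockF k p.1 p.2, x z = 1) :
    ∑ l ∈ Finset.range k, ∑ z ∈ (GofI k I).filter (fun z => z.2 = j), x (z.1, j + l)
      = (I.filter (fun z => z.2 = j)).card := by
  refine Eq.trans Finset.sum_comm ?_
  rw [filter_snd_GofI hk hI hj, Finset.sum_biUnion (disjRow hk hI j),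
    Finset.card_eq_sum_ones]
  refine Finset.sum_congr rfl fun q hq => ?_
  rw [Finset.mem_filter] at hq
  have h1 := hblk q hq.1
  rw [hq.2] at h1
  refine Eq.trans ?_ h1
  simp only [blockF, Finset.sum_product, Finset.sum_singleton]
  exact Finset.sum_congr rfl fun p _ => (sum_Icc_off (fun s => x (p, s)) j k hk).symm

lemma col_strip_sum {k m n : ℕ} (hk : 0 < k) {I : Finset (ℕ × ℕ)} (hI : I ⊆ cornerPts m n k)
    (x : ℕ × ℕ → ℕ) {i : ℕ} (hi : i % k = 1 % k)
    (hblk : ∀ p ∈ I, ∑ z ∈ blockF k p.1 p.2, x z = 1) :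
    ∑ l ∈ Finset.range k, ∑ z ∈ (GofI k I).filter (fun z => z.1 = i), x (i + l, z.2)
      = (I.filter (fun z => z.1 = i)).card := by
  refine Eq.trans Finset.sum_comm ?_
  rw [filter_fst_GofI hk hI hi, Finset.sum_biUnion (disjCol hk hI i),
    Finset.card_eq_sum_ones]
  refine Finset.sum_congr rfl fun q hq => ?_
  rw [Finset.mem_filter] at hq
  have h1 := hblk q hq.1
  rw [hq.2] at h1
  refine Eq.trans ?_ h1
  simp only [blockF, Finset.sum_product, Finset.sum_singleton]
  refine Eq.trans Finset.sum_comm ?_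
  exact (sum_Icc_off (fun p => ∑ s ∈ Finset.Icc q.2 (q.2 + k - 1), x (p, s)) i k hk).symm

end Strips

section Construction

/-- row offset of the block with corner `(i,j)` -/
noncomputable def rowOffD (I : Finset (ℕ × ℕ)) (r : ℕ → ℕ) (i j : ℕ) : ℕ :=
  offF (fun l => r (j + l))
    ((((I.filter fun z => z.2 = j).image Prod.fst)).filter (· < i)).card

/-- column offset of the block with corner `(i,j)` -/
noncomputable def colOffD (I : Finset (ℕ × ℕ)) (c : ℕ → ℕ) (i j : ℕ) : ℕ :=
  offF (fun l => c (i + l))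
    ((((I.filter fun z => z.1 = i).image Prod.snd)).filter (· < j)).card

/-- the position of the unique one in the block with corner `z` -/
noncomputable def ptD (I : Finset (ℕ × ℕ)) (r c : ℕ → ℕ) (z : ℕ × ℕ) : ℕ × ℕ :=
  (z.1 + colOffD I c z.1 z.2, z.2 + rowOffD I r z.1 z.2)

/-- the candidate solution -/
noncomputable def xD (I : Finset (ℕ × ℕ)) (r c : ℕ → ℕ) (w : ℕ × ℕ) : ℕ :=
  if w ∈ I.image (ptD I r c) then 1 else 0

lemma rowOffD_lt {I : Finset (ℕ × ℕ)} {r : ℕ → ℕ} {k : ℕ} {z : ℕ × ℕ} (hz : z ∈ I)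
    (hcard : (I.filter fun w => w.2 = z.2).card = psum (fun l => r (z.2 + l)) k) :
    rowOffD I r z.1 z.2 < k := by
  have h1 : z ∈ I.filter fun w => w.2 = z.2 := Finset.mem_filter.mpr ⟨hz, rfl⟩
  have h2 := rank_lt _ Prod.fst (injOn_fst_strip I z.2) h1
  rw [hcard] at h2
  exact (off_spec _ _ k h2).2.2

lemma colOffD_lt {I : Finset (ℕ × ℕ)} {c : ℕ → ℕ} {k : ℕ} {z : ℕ × ℕ} (hz : z ∈ I)
    (hcard : (I.filter fun w => w.1 = z.1).card = psum (fun l => c (z.1 + l)) k) :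
    colOffD I c z.1 z.2 < k := by
  have h1 : z ∈ I.filter fun w => w.1 = z.1 := Finset.mem_filter.mpr ⟨hz, rfl⟩
  have h2 := rank_lt _ Prod.snd (injOn_snd_strip I z.1) h1
  rw [hcard] at h2
  exact (off_spec _ _ k h2).2.2

lemma count_rowOff {I : Finset (ℕ × ℕ)} {r : ℕ → ℕ} {k j l : ℕ}
    (hcard : (I.filter fun z => z.2 = j).card = psum (fun l => r (j + l)) k) (hl : l < k) :
    ((I.filter fun z => z.2 = j).filter (fun q => rowOffD I r q.1 j = l)).card = r (j + l) := by
  have h := card_filter_rank' (I.filter fun z => z.2 = j) Prod.fst (injOn_fst_strip I j)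
    (fun t => offF (fun l' => r (j + l')) t = l)
  rw [hcard] at h
  rw [← off_count (fun l' => r (j + l')) k l hl]
  exact h

lemma count_colOff {I : Finset (ℕ × ℕ)} {c : ℕ → ℕ} {k i l : ℕ}
    (hcard : (I.filter fun z => z.1 = i).card = psum (fun l => c (i + l)) k) (hl : l < k) :
    ((I.filter fun z => z.1 = i).filter (fun q => colOffD I c i q.2 = l)).card = c (i + l) := by
  have h := card_filter_rank' (I.filter fun z => z.1 = i) Prod.snd (injOn_snd_strip I i)
    (fun t => offF (fun l' => c (i + l')) t = l)
  rw [hcard] at h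
  rw [← off_count (fun l' => c (i + l')) k l hl]
  exact h

end Construction

/-- An instance of DR(1) admits a solution if and only if for every `(i,j) ∈ I`
one has `Σ_{l=0}^{k−1} r_{j+l} = ρ_j(m)` and `Σ_{l=0}^{k−1} c_{i+l} = σ_i(n)`. -/
theorem stmt1 (k m n : ℕ) (hk : 0 < k)
    (hm : k ∣ m) (hm0 : 0 < m) (hn : k ∣ n) (hn0 : 0 < n)
    (I : Finset (ℕ × ℕ)) (hI : I ⊆ cornerPts m n k) (r c : ℕ → ℕ) :
    (∃ x : ℕ × ℕ → ℕ,
      (∀ p ∈ GofI k I, x p ≤ 1) ∧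
      (∀ j ∈ PiY I, ∀ l < k,
        ∑ z ∈ (GofI k I).filter (fun z => z.2 = j), x (z.1, j + l) = r (j + l)) ∧
      (∀ i ∈ PiX I, ∀ l < k,
        ∑ z ∈ (GofI k I).filter (fun z => z.1 = i), x (i + l, z.2) = c (i + l)) ∧
      (∀ p ∈ I, ∑ z ∈ blockF k p.1 p.2, x z = 1))
    ↔ (∀ p ∈ I,
        (∑ l ∈ Finset.range k, r (p.2 + l)) = rhoI I p.2 m ∧
        (∑ l ∈ Finset.range k, c (p.1 + l)) = sigmaI I p.1 n) := by
  constructor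
  · rintro ⟨x, -, hrow, hcol, hblk⟩ p hp
    have hpc := mem_cornerPts.mp (hI hp)
    constructor
    · have hj : p.2 ∈ PiY I := Finset.mem_image_of_mem Prod.snd hp
      have h1 := row_strip_sum hk hI x hpc.2.2 hblk
      rw [rhoI_card hI p.2, ← h1]
      exact Finset.sum_congr rfl fun l hl =>
        (hrow p.2 hj l (Finset.mem_range.mp hl)).symm
    · have hi : p.1 ∈ PiX I := Finset.mem_image_of_mem Prod.fst hp
      have h1 := col_strip_sum hk hI x hpc.2.1 hblk
      rw [sigmaI_card hI p.1, ← h1]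
      exact Finset.sum_congr rfl fun l hl =>
        (hcol p.1 hi l (Finset.mem_range.mp hl)).symm
  · intro h
    -- preliminary counting facts
    have hrowc : ∀ z ∈ I, (I.filter fun w => w.2 = z.2).card = psum (fun l => r (z.2 + l)) k := by
      intro z hz
      have := (h z hz).1
      rw [rhoI_card hI z.2] at this
      rw [← this]; rfl
    have hcolc : ∀ z ∈ I, (I.filter fun w => w.1 = z.1).card = psum (fun l => c (z.1 + l)) k := by
      intro z hz
      have := (h z hz).2
      rw [sigmaI_card hI z.1] at this
      rw [← this]; rfl
    have hrlt : ∀ z ∈ I, rowOffD I r z.1 z.2 < k := fun z hz => rowOffD_lt hz (hrowc z hz)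
    have hclt : ∀ z ∈ I, colOffD I c z.1 z.2 < k := fun z hz => colOffD_lt hz (hcolc z hz)
    have hptblk : ∀ z ∈ I, ptD I r c z ∈ blockF k z.1 z.2 := by
      intro z hz
      have h1 := hrlt z hz
      have h2 := hclt z hz
      rw [mem_blockF]
      simp only [ptD]
      omega
    have huniq : ∀ z ∈ I, ∀ q ∈ I, ptD I r c z ∈ blockF k q.1 q.2 → z = q := by
      intro z hz q hq hmem
      have h1 := hrlt z hz
      have h2 := hclt z hz
      have hzc := mem_cornerPts.mp (hI hz)
      have hqc := mem_cornerPts.mp (hI hq)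
      rw [mem_blockF] at hmem
      simp only [ptD] at hmem
      refine Prod.ext ?_ ?_
      · exact corner_unique (p := z.1 + colOffD I c z.1 z.2) hk hzc.2.1 hqc.2.1
          (by omega) (by omega) hmem.1.1 hmem.1.2
      · exact corner_unique (p := z.2 + rowOffD I r z.1 z.2) hk hzc.2.2 hqc.2.2
          (by omega) (by omega) hmem.2.1 hmem.2.2
    refine ⟨xD I r c, ?_, ?_, ?_, ?_⟩
    · intro p _
      unfold xD
      split <;> omega
    · -- row constraints
      intro j hj l hl
      rw [PiY, Finset.mem_image] at hj
      obtain ⟨zj, hzjI, hzj2⟩ := hj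
      have hjmod : j % k = 1 % k := by
        have := (mem_cornerPts.mp (hI hzjI)).2.2
        rwa [hzj2] at this
      rw [filter_snd_GofI hk hI hjmod, Finset.sum_biUnion (disjRow hk hI j)]
      have key : ∀ q ∈ I.filter (fun z => z.2 = j),
          ∑ z ∈ Finset.Icc q.1 (q.1 + k - 1) ×ˢ ({j} : Finset ℕ), xD I r c (z.1, j + l)
            = if rowOffD I r q.1 j = l then 1 else 0 := by
        intro q hq
        rw [Finset.mem_filter] at hq
        obtain ⟨hqI, hq2⟩ := hq
        simp only [Finset.sum_product, Finset.sum_singleton]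
        have hchar : ∀ p ∈ Finset.Icc q.1 (q.1 + k - 1),
            ((p, j + l) ∈ I.image (ptD I r c) ↔
              (rowOffD I r q.1 j = l ∧ p = q.1 + colOffD I c q.1 j)) := by
          intro p hp
          rw [Finset.mem_Icc] at hp
          constructor
          · intro hmem
            rw [Finset.mem_image] at hmem
            obtain ⟨z, hzI, hze⟩ := hmem
            have hzc := mem_cornerPts.mp (hI hzI)
            have h1 : z.1 + colOffD I c z.1 z.2 = p := congrArg Prod.fst hze
            have h2 : z.2 + rowOffD I r z.1 z.2 = j + l := congrArg Prod.snd hze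
            have hb1 := hclt z hzI
            have hb2 := hrlt z hzI
            have hz1 : z.1 = q.1 := by
              have hqc := mem_cornerPts.mp (hI hqI)
              exact corner_unique (p := p) hk hzc.2.1 hqc.2.1
                (by omega) (by omega) hp.1 hp.2
            have hz2 : z.2 = j := by
              exact corner_unique (p := j + l) hk hzc.2.2 hjmod
                (by omega) (by omega) (by omega) (by omega)
            have hzq : z = (q.1, j) := Prod.ext hz1 hz2
            have hqq : q = (q.1, j) := Prod.ext rfl hq2
            rw [← hqq] at hzq
            rw [hzq] at h1 h2
            rw [hq2] at h1 h2
            constructor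
            · omega
            · omega
          · rintro ⟨h1, h2⟩
            rw [Finset.mem_image]
            refine ⟨q, hqI, ?_⟩
            unfold ptD
            rw [hq2, h1, h2]
        calc ∑ p ∈ Finset.Icc q.1 (q.1 + k - 1), xD I r c (p, j + l)
            = ∑ p ∈ Finset.Icc q.1 (q.1 + k - 1),
                (if (rowOffD I r q.1 j = l ∧ p = q.1 + colOffD I c q.1 j) then 1 else 0) := by
              refine Finset.sum_congr rfl fun p hp => ?_
              unfold xD
              by_cases hmem2 : (p, j + l) ∈ I.image (ptD I r c)
              · rw [if_pos hmem2, if_pos ((hchar p hp).mp hmem2)]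
              · rw [if_neg hmem2, if_neg (fun hcon => hmem2 ((hchar p hp).mpr hcon))]
          _ = if rowOffD I r q.1 j = l then 1 else 0 := by
              by_cases hoff : rowOffD I r q.1 j = l
              · rw [if_pos hoff]
                have hco : colOffD I c q.1 j < k := by
                  have := hclt q hqI
                  rwa [hq2] at this
                have hstep : ∀ p ∈ Finset.Icc q.1 (q.1 + k - 1),
                    (if (rowOffD I r q.1 j = l ∧ p = q.1 + colOffD I c q.1 j) then (1:ℕ) else 0)
                      = if p = q.1 + colOffD I c q.1 j then (1:ℕ) else 0 := by
                  intro p _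
                  by_cases hp2 : p = q.1 + colOffD I c q.1 j
                  · rw [if_pos ⟨hoff, hp2⟩, if_pos hp2]
                  · rw [if_neg (fun hcon => hp2 hcon.2), if_neg hp2]
                rw [Finset.sum_congr rfl hstep,
                  Finset.sum_ite_eq' (Finset.Icc q.1 (q.1 + k - 1))
                    (q.1 + colOffD I c q.1 j) (fun _ => (1:ℕ))]
                rw [if_pos (by rw [Finset.mem_Icc]; omega)]
              · rw [if_neg hoff]
                apply Finset.sum_eq_zero
                intro p hp
                rw [if_neg]
                rintro ⟨h1, -⟩
                exact hoff h1
      have hc := hrowc zj hzjI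
      rw [hzj2] at hc
      calc ∑ q ∈ I.filter (fun z => z.2 = j),
            ∑ z ∈ Finset.Icc q.1 (q.1 + k - 1) ×ˢ ({j} : Finset ℕ), xD I r c (z.1, j + l)
          = ∑ q ∈ I.filter (fun z => z.2 = j),
              (if rowOffD I r q.1 j = l then 1 else 0) := Finset.sum_congr rfl key
        _ = ((I.filter fun z => z.2 = j).filter (fun q => rowOffD I r q.1 j = l)).card :=
            sum_ind _ _
        _ = r (j + l) := count_rowOff hc hl
    · -- column constraints
      intro i hi l hl
      rw [PiX, Finset.mem_image] at hi
      obtain ⟨zi, hziI, hzi1⟩ := hi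
      have himod : i % k = 1 % k := by
        have := (mem_cornerPts.mp (hI hziI)).2.1
        rwa [hzi1] at this
      rw [filter_fst_GofI hk hI himod, Finset.sum_biUnion (disjCol hk hI i)]
      have key : ∀ q ∈ I.filter (fun z => z.1 = i),
          ∑ z ∈ ({i} : Finset ℕ) ×ˢ Finset.Icc q.2 (q.2 + k - 1), xD I r c (i + l, z.2)
            = if colOffD I c i q.2 = l then 1 else 0 := by
        intro q hq
        rw [Finset.mem_filter] at hq
        obtain ⟨hqI, hq1⟩ := hq
        simp only [Finset.sum_product, Finset.sum_singleton]
        have hchar : ∀ p ∈ Finset.Icc q.2 (q.2 + k - 1),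
            ((i + l, p) ∈ I.image (ptD I r c) ↔
              (colOffD I c i q.2 = l ∧ p = q.2 + rowOffD I r i q.2)) := by
          intro p hp
          rw [Finset.mem_Icc] at hp
          constructor
          · intro hmem
            rw [Finset.mem_image] at hmem
            obtain ⟨z, hzI, hze⟩ := hmem
            have hzc := mem_cornerPts.mp (hI hzI)
            have h1 : z.1 + colOffD I c z.1 z.2 = i + l := congrArg Prod.fst hze
            have h2 : z.2 + rowOffD I r z.1 z.2 = p := congrArg Prod.snd hze
            have hb1 := hclt z hzI
            have hb2 := hrlt z hzI
            have hz2 : z.2 = q.2 := by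
              have hqc := mem_cornerPts.mp (hI hqI)
              exact corner_unique (p := p) hk hzc.2.2 hqc.2.2
                (by omega) (by omega) hp.1 hp.2
            have hz1 : z.1 = i := by
              exact corner_unique (p := i + l) hk hzc.2.1 himod
                (by omega) (by omega) (by omega) (by omega)
            have hzq : z = (i, q.2) := Prod.ext hz1 hz2
            have hqq : q = (i, q.2) := Prod.ext hq1 rfl
            rw [← hqq] at hzq
            rw [hzq] at h1 h2
            rw [hq1] at h1 h2
            constructor
            · omega
            · omega
          · rintro ⟨h1, h2⟩
            rw [Finset.mem_image]
            refine ⟨q, hqI, ?_⟩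
            unfold ptD
            rw [hq1, h1, h2]
        calc ∑ p ∈ Finset.Icc q.2 (q.2 + k - 1), xD I r c (i + l, p)
            = ∑ p ∈ Finset.Icc q.2 (q.2 + k - 1),
                (if (colOffD I c i q.2 = l ∧ p = q.2 + rowOffD I r i q.2) then 1 else 0) := by
              refine Finset.sum_congr rfl fun p hp => ?_
              unfold xD
              by_cases hmem2 : (i + l, p) ∈ I.image (ptD I r c)
              · rw [if_pos hmem2, if_pos ((hchar p hp).mp hmem2)]
              · rw [if_neg hmem2, if_neg (fun hcon => hmem2 ((hchar p hp).mpr hcon))]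
          _ = if colOffD I c i q.2 = l then 1 else 0 := by
              by_cases hoff : colOffD I c i q.2 = l
              · rw [if_pos hoff]
                have hro : rowOffD I r i q.2 < k := by
                  have := hrlt q hqI
                  rwa [hq1] at this
                have hstep : ∀ p ∈ Finset.Icc q.2 (q.2 + k - 1),
                    (if (colOffD I c i q.2 = l ∧ p = q.2 + rowOffD I r i q.2) then (1:ℕ) else 0)
                      = if p = q.2 + rowOffD I r i q.2 then (1:ℕ) else 0 := by
                  intro p _
                  by_cases hp2 : p = q.2 + rowOffD I r i q.2
                  · rw [if_pos ⟨hoff, hp2⟩, if_pos hp2]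
                  · rw [if_neg (fun hcon => hp2 hcon.2), if_neg hp2]
                rw [Finset.sum_congr rfl hstep,
                  Finset.sum_ite_eq' (Finset.Icc q.2 (q.2 + k - 1))
                    (q.2 + rowOffD I r i q.2) (fun _ => (1:ℕ))]
                rw [if_pos (by rw [Finset.mem_Icc]; omega)]
              · rw [if_neg hoff]
                apply Finset.sum_eq_zero
                intro p hp
                rw [if_neg]
                rintro ⟨h1, -⟩
                exact hoff h1
      have hc := hcolc zi hziI
      rw [hzi1] at hc
      calc ∑ q ∈ I.filter (fun z => z.1 = i),
            ∑ z ∈ ({i} : Finset ℕ) ×ˢ Finset.Icc q.2 (q.2 + k - 1), xD I r c (i + l, z.2)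
          = ∑ q ∈ I.filter (fun z => z.1 = i),
              (if colOffD I c i q.2 = l then 1 else 0) := Finset.sum_congr rfl key
        _ = ((I.filter fun z => z.1 = i).filter (fun q => colOffD I c i q.2 = l)).card :=
            sum_ind _ _
        _ = c (i + l) := count_colOff hc hl
    · -- block constraints
      intro q hq
      have hfil : (blockF k q.1 q.2).filter (fun w => w ∈ I.image (ptD I r c))
          = {ptD I r c q} := by
        ext w
        simp only [Finset.mem_filter, Finset.mem_singleton]
        constructor
        · rintro ⟨hw, hmem⟩
          rw [Finset.mem_image] at hmem
          obtain ⟨z, hzI, rfl⟩ := hmem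
          rw [huniq z hzI q hq hw]
        · rintro rfl
          exact ⟨hptblk q hq, Finset.mem_image_of_mem _ hq⟩
      calc ∑ z ∈ blockF k q.1 q.2, xD I r c z
          = ∑ z ∈ blockF k q.1 q.2,
              (if z ∈ I.image (ptD I r c) then (1:ℕ) else 0) := by
            refine Finset.sum_congr rfl fun z _ => ?_
            rfl
        _ = ((blockF k q.1 q.2).filter (fun w => w ∈ I.image (ptD I r c))).card := sum_ind _ _
        _ = 1 := by rw [hfil, Finset.card_singleton]
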